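/- Let Ĉ be the stochastic SC decoder: a random vector on a common probability space with (X,Y) such that Ĉ_i = C_i for every i ∈ I1 and, for each i ∈ I0, conditionally on (Ĉ_1^{i−1}, Y) the symbol Ĉ_i has distribution μ_{C_i|C_1^{i−1}Y}(· | Ĉ_1^{i−1}, Y) and is conditionally independent of X. Let E ≡ Prob(T^{−1}(Ĉ) ≠ X). If E ≤ 1/2, then Σ_{i∈I0} H(C_i | C_1^{i−1}, Y) ≤ n·(E + h(E)), where H denotes conditional Shannon entropy with logarithm base |𝒳| and h(θ) ≡ −θ log_{|𝒳|} θ − (1−θ) log_{|𝒳|}(1−θ) is the binary entropy function (with h(0) = 0). -/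

import Mathlib

open Finset

noncomputable def probOf {Ω : Type*} [Fintype Ω] (p : Ω → ℝ) (E : Set Ω) : ℝ :=
  ∑ ω, E.indicator p ω

noncomputable def condProb {Ω : Type*} [Fintype Ω] (p : Ω → ℝ) (E F : Set Ω) : ℝ :=
  probOf p (E ∩ F) / probOf p F

noncomputable def entropyOf {Ω Z : Type*} [Fintype Ω] [Fintype Z] (p : Ω → ℝ) (V : Ω → Z) : ℝ :=
  ∑ z, Real.negMulLog (probOf p {ω | V ω = z})

noncomputable def condEntropyOf {Ω U V : Type*} [Fintype Ω] [Fintype U] [Fintype V]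
    (p : Ω → ℝ) (Uv : Ω → U) (Vv : Ω → V) : ℝ :=
  entropyOf p (fun ω => (Uv ω, Vv ω)) - entropyOf p Vv

def prefixVec {𝒳 : Type*} {n : ℕ} (c : Fin n → 𝒳) (m : ℕ) (h : m ≤ n) : Fin m → 𝒳 :=
  fun k => c ⟨k.1, lt_of_lt_of_le k.2 h⟩

def scVecGo {𝒳 : Type*} {n : ℕ} (g : (i : Fin n) → (Fin i.1 → 𝒳) → 𝒳) :
    (k : ℕ) → k < n → 𝒳
  | k, hk => g ⟨k, hk⟩ (fun j => scVecGo g j.1 (j.2.trans hk))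
termination_by k _ => k
decreasing_by exact j.2

def scVec {𝒳 : Type*} {n : ℕ} (g : (i : Fin n) → (Fin i.1 → 𝒳) → 𝒳) : Fin n → 𝒳 :=
  fun i => scVecGo g i.1 i.2

def scDec {𝒳 𝒴 : Type*} {n l : ℕ}
    (I1 : Finset (Fin n)) (hc1 : I1.card = l)
    (f : (i : Fin n) → (Fin i.1 → 𝒳) → (Fin n → 𝒴) → 𝒳)
    (c : Fin l → 𝒳) (y : Fin n → 𝒴) : Fin n → 𝒳 :=
  scVec (fun i pref => if h : i ∈ I1 then c ((I1.orderIsoOfFin hc1).symm ⟨i, h⟩) else f i pref y)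

def scDecOrd {𝒳 𝒴 : Type*} {n l : ℕ}
    (f : (i : Fin n) → (Fin i.1 → 𝒳) → (Fin n → 𝒴) → 𝒳)
    (c : Fin l → 𝒳) (y : Fin n → 𝒴) : Fin n → 𝒳 :=
  scVec (fun i pref => if h : i.1 < l then c ⟨i.1, h⟩ else f i pref y)

namespace Stmt10Aux

variable {Ω : Type*} [Fintype Ω] {p : Ω → ℝ}

lemma probOf_nonneg (hp0 : ∀ ω, 0 ≤ p ω) (A : Set Ω) : 0 ≤ probOf p A :=
  Finset.sum_nonneg fun ω _ => Set.indicator_nonneg (fun ω _ => hp0 ω) ω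

lemma probOf_mono (hp0 : ∀ ω, 0 ≤ p ω) {A B : Set Ω} (h : A ⊆ B) : probOf p A ≤ probOf p B :=
  Finset.sum_le_sum fun ω _ => Set.indicator_le_indicator_of_subset h (fun _ => hp0 _) ω

@[simp] lemma probOf_empty : probOf p (∅ : Set Ω) = 0 := by simp [probOf]

lemma probOf_eq_zero (hp0 : ∀ ω, 0 ≤ p ω) {A B : Set Ω} (h : A ⊆ B)
    (hB : probOf p B ≤ 0) : probOf p A = 0 :=
  le_antisymm ((probOf_mono hp0 h).trans hB) (probOf_nonneg hp0 A)

lemma probOf_fiber {Z : Type*} [Fintype Z] (p : Ω → ℝ) (A : Set Ω) (W : Ω → Z) :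
    probOf p A = ∑ z, probOf p (A ∩ {ω | W ω = z}) := by
  have h : ∀ ω, A.indicator p ω = ∑ z, (A ∩ {ω | W ω = z}).indicator p ω := by
    intro ω
    by_cases h : ω ∈ A
    · rw [Set.indicator_of_mem h,
        Finset.sum_eq_single_of_mem (W ω) (Finset.mem_univ _)
          (fun z _ hz => Set.indicator_of_notMem (fun hm => hz hm.2.symm) _)]
      exact (Set.indicator_of_mem (show ω ∈ A ∩ {ω' | W ω' = W ω} from ⟨h, rfl⟩) p).symm
    · simp only [Set.indicator_of_notMem h]
      refine (Finset.sum_eq_zero fun z _ => Set.indicator_of_notMem (fun hm => h hm.1) _).symm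
  simp only [probOf, h]
  exact Finset.sum_comm

lemma probOf_add_compl (p : Ω → ℝ) (A : Set Ω) :
    probOf p A + probOf p Aᶜ = ∑ ω, p ω := by
  rw [probOf, probOf, ← Finset.sum_add_distrib]
  refine Finset.sum_congr rfl fun ω _ => ?_
  by_cases h : ω ∈ A
  · rw [Set.indicator_of_mem h, Set.indicator_of_notMem (by simpa using h), add_zero]
  · rw [Set.indicator_of_notMem h, Set.indicator_of_mem (by simpa using h), zero_add]

lemma condProb_nonneg (hp0 : ∀ ω, 0 ≤ p ω) (A B : Set Ω) : 0 ≤ condProb p A B :=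
  div_nonneg (probOf_nonneg hp0 _) (probOf_nonneg hp0 _)

lemma condProb_le_one (hp0 : ∀ ω, 0 ≤ p ω) (A B : Set Ω) : condProb p A B ≤ 1 := by
  unfold condProb
  rcases le_or_gt (probOf p B) 0 with h | h
  · rw [le_antisymm h (probOf_nonneg hp0 B)]; simp
  · exact div_le_one_of_le₀ (probOf_mono hp0 Set.inter_subset_right) h.le

end Stmt10Aux

namespace Stmt10Aux
open Real

lemma sum_negMulLog_le_aux {α : Type*} (s : Finset α) (x : α → ℝ) (hx : ∀ a ∈ s, 0 ≤ x a) :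
    ∑ a ∈ s, negMulLog (x a) ≤
      negMulLog (∑ a ∈ s, x a) + (∑ a ∈ s, x a) * Real.log s.card := by
  rcases s.eq_empty_or_nonempty with rfl | hs
  · simp
  have hk : (0 : ℝ) < s.card := by exact_mod_cast Finset.card_pos.mpr hs
  have hjen := concaveOn_negMulLog.le_map_sum (t := s) (w := fun _ => (s.card : ℝ)⁻¹)
    (p := x) (fun a _ => by positivity)
    (by rw [Finset.sum_const, nsmul_eq_mul, mul_inv_cancel₀ hk.ne'])
    (fun a ha => hx a ha)
  simp only [smul_eq_mul, ← Finset.mul_sum] at hjen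
  have h2 : ∑ a ∈ s, negMulLog (x a) ≤
      (s.card : ℝ) * negMulLog ((s.card : ℝ)⁻¹ * ∑ a ∈ s, x a) := by
    rw [← mul_le_mul_iff_right₀ (show (0:ℝ) < (s.card:ℝ)⁻¹ by positivity), ← mul_assoc,
      inv_mul_cancel₀ hk.ne', one_mul]
    exact hjen
  refine h2.trans (le_of_eq ?_)
  have hn : negMulLog (s.card : ℝ)⁻¹ = (s.card:ℝ)⁻¹ * Real.log s.card := by
    unfold Real.negMulLog; rw [Real.log_inv]; ring
  rw [negMulLog_mul, mul_add, hn]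
  field_simp
  ring

lemma fano_aux {α : Type*} [Fintype α] (g : α → ℝ) (h0 : ∀ a, 0 ≤ g a) (h1 : ∑ a, g a = 1)
    (a₀ : α) :
    ∑ a, negMulLog (g a) ≤
      binEntropy (1 - g a₀) + (1 - g a₀) * Real.log (Fintype.card α) := by
  classical
  have hπle : g a₀ ≤ 1 := by
    rw [← h1]
    exact Finset.single_le_sum (fun a _ => h0 a) (Finset.mem_univ a₀)
  have hq0 : 0 ≤ 1 - g a₀ := by linarith
  have hqsum : ∑ a ∈ Finset.univ.erase a₀, g a = 1 - g a₀ := by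
    rw [Finset.sum_erase_eq_sub (Finset.mem_univ a₀), h1]
  rw [← Finset.add_sum_erase _ _ (Finset.mem_univ a₀)]
  have h2 := sum_negMulLog_le_aux (Finset.univ.erase a₀) g (fun a _ => h0 a)
  rw [hqsum] at h2
  have hlog : Real.log ((Finset.univ.erase a₀).card) ≤ Real.log (Fintype.card α) := by
    rcases Nat.eq_zero_or_pos (Finset.univ.erase a₀).card with h | h
    · rw [h]; simpa using Real.log_natCast_nonneg (Fintype.card α)
    · refine Real.log_le_log (by exact_mod_cast h) (Nat.cast_le.mpr ?_)
      exact (Finset.card_le_card (Finset.subset_univ _)).trans_eq Finset.card_univ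
  have h4 : negMulLog (g a₀) = negMulLog (1 - (1 - g a₀)) := by ring_nf
  rw [binEntropy_eq_negMulLog_add_negMulLog_one_sub, h4]
  have h5 := mul_le_mul_of_nonneg_left hlog hq0
  linarith

end Stmt10Aux

namespace Stmt10Aux
open Real

variable {Ω : Type*} [Fintype Ω] {p : Ω → ℝ}

lemma inter_prob_zero (hp0 : ∀ ω, 0 ≤ p ω) {A B : Set Ω} (hB : probOf p B = 0) :
    probOf p (A ∩ B) = 0 :=
  probOf_eq_zero hp0 Set.inter_subset_right hB.le

lemma condEntropyOf_eq {U V : Type*} [Fintype U] [Fintype V]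
    (hp0 : ∀ ω, 0 ≤ p ω) (Uv : Ω → U) (Vv : Ω → V) :
    condEntropyOf p Uv Vv = ∑ v, probOf p {ω | Vv ω = v} *
      ∑ a, negMulLog (condProb p {ω | Uv ω = a} {ω | Vv ω = v}) := by
  have hset : ∀ (a : U) (v : V),
      {ω | (Uv ω, Vv ω) = (a, v)} = {ω | Uv ω = a} ∩ {ω | Vv ω = v} := by
    intro a v; ext ω; simp [Prod.ext_iff]
  have hjoint : entropyOf p (fun ω => (Uv ω, Vv ω)) =
      entropyOf p Vv + ∑ v, probOf p {ω | Vv ω = v} *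
        ∑ a, negMulLog (condProb p {ω | Uv ω = a} {ω | Vv ω = v}) := by
    rw [entropyOf, Fintype.sum_prod_type, Finset.sum_comm, entropyOf, ← Finset.sum_add_distrib]
    refine Finset.sum_congr rfl fun v _ => ?_
    by_cases hv : probOf p {ω | Vv ω = v} = 0
    · rw [hv]
      simp only [hv, negMulLog_zero, zero_mul, add_zero]
      refine Finset.sum_eq_zero fun a _ => ?_
      rw [hset a v, inter_prob_zero hp0 hv, negMulLog_zero]
    · have hsum1 : ∑ a, condProb p {ω | Uv ω = a} {ω | Vv ω = v} = 1 := by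
        simp only [condProb]
        rw [← Finset.sum_div, div_eq_one_iff_eq hv]
        rw [probOf_fiber p {ω | Vv ω = v} Uv]
        exact Finset.sum_congr rfl fun a _ => by rw [Set.inter_comm]
      have hPa : ∀ a, probOf p ({ω | Uv ω = a} ∩ {ω | Vv ω = v}) =
          probOf p {ω | Vv ω = v} * condProb p {ω | Uv ω = a} {ω | Vv ω = v} := by
        intro a; rw [condProb, mul_div_cancel₀ _ hv]
      calc ∑ a, negMulLog (probOf p {ω | (Uv ω, Vv ω) = (a, v)})
          = ∑ a, (condProb p {ω | Uv ω = a} {ω | Vv ω = v} *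
              negMulLog (probOf p {ω | Vv ω = v}) +
            probOf p {ω | Vv ω = v} *
              negMulLog (condProb p {ω | Uv ω = a} {ω | Vv ω = v})) := by
            refine Finset.sum_congr rfl fun a _ => ?_
            rw [hset a v, hPa a, negMulLog_mul]
        _ = negMulLog (probOf p {ω | Vv ω = v}) + probOf p {ω | Vv ω = v} *
              ∑ a, negMulLog (condProb p {ω | Uv ω = a} {ω | Vv ω = v}) := by
            rw [Finset.sum_add_distrib, ← Finset.sum_mul, hsum1, one_mul, Finset.mul_sum]
  rw [condEntropyOf, hjoint]
  ring

end Stmt10Aux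

namespace Stmt10Aux
open Real

variable {Ω : Type*} [Fintype Ω] {p : Ω → ℝ}

lemma sum_condProb_eq_one {U : Type*} [Fintype U] (Uv : Ω → U) (B : Set Ω)
    (hB : probOf p B ≠ 0) : ∑ a, condProb p {ω | Uv ω = a} B = 1 := by
  simp only [condProb]
  rw [← Finset.sum_div, div_eq_one_iff_eq hB, probOf_fiber p B Uv]
  exact Finset.sum_congr rfl fun a _ => by rw [Set.inter_comm]

lemma key {𝒳' V : Type*} [Fintype 𝒳'] [Fintype V]
    (hcard : 2 ≤ Fintype.card 𝒳') (hp0 : ∀ ω, 0 ≤ p ω) (hp1 : ∑ ω, p ω = 1)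
    (Uv : Ω → 𝒳') (Vv : Ω → V) (E : ℝ) (hE0 : 0 ≤ E) (hhalf : E ≤ 1 / 2)
    (hρ : 1 - E ≤ ∑ v, ∑ a, probOf p ({ω | Uv ω = a} ∩ {ω | Vv ω = v}) *
        condProb p {ω | Uv ω = a} {ω | Vv ω = v}) :
    condEntropyOf p Uv Vv ≤ binEntropy E + E * Real.log (Fintype.card 𝒳') := by
  classical
  set m : ℝ := (Fintype.card 𝒳' : ℝ) with hm
  have hm1 : (1 : ℝ) ≤ m := by rw [hm]; exact_mod_cast (by omega : 1 ≤ Fintype.card 𝒳')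
  have hlogm : 0 ≤ Real.log m := Real.log_nonneg hm1
  set P : V → ℝ := fun v => probOf p {ω | Vv ω = v} with hP
  set cnd : V → 𝒳' → ℝ := fun v a => condProb p {ω | Uv ω = a} {ω | Vv ω = v} with hcnd
  have hPnn : ∀ v, 0 ≤ P v := fun v => probOf_nonneg hp0 _
  have hPsum : ∑ v, P v = 1 := by
    have := probOf_fiber p Set.univ Vv
    simp only [Set.univ_inter] at this
    rw [hP, ← this, probOf]
    simpa [Set.indicator_univ] using hp1
  have hcnd0 : ∀ v a, 0 ≤ cnd v a := fun v a => condProb_nonneg hp0 _ _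
  have hcnd1 : ∀ v a, cnd v a ≤ 1 := fun v a => condProb_le_one hp0 _ _
  -- choose argmax
  have hne : Nonempty 𝒳' := Fintype.card_pos_iff.mp (by omega)
  have hex : ∀ v : V, ∃ a : 𝒳', ∀ b, cnd v b ≤ cnd v a := by
    intro v
    obtain ⟨b, -, hb⟩ := Finset.exists_max_image Finset.univ (cnd v) Finset.univ_nonempty
    exact ⟨b, fun a => hb a (Finset.mem_univ a)⟩
  choose a₀ ha₀ using hex
  set q : V → ℝ := fun v => 1 - cnd v (a₀ v) with hqdef
  have hq01 : ∀ v, q v ∈ Set.Icc (0:ℝ) 1 := by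
    intro v
    constructor
    · simp only [hqdef]; linarith [hcnd1 v (a₀ v)]
    · simp only [hqdef]; linarith [hcnd0 v (a₀ v)]
  set f : ℝ → ℝ := fun t => binEntropy t + t * Real.log m with hf
  have hconc : ConcaveOn ℝ (Set.Icc (0:ℝ) 1) f := by
    refine ConcaveOn.add strictConcave_binEntropy.concaveOn ?_
    exact ⟨convex_Icc 0 1, fun x _ y _ a b _ _ _ => le_of_eq (by simp only [smul_eq_mul]; ring)⟩
  -- Step A+B : chain rule and Fano
  have hAB : condEntropyOf p Uv Vv ≤ ∑ v, P v * f (q v) := by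
    have hchain : condEntropyOf p Uv Vv = ∑ v, P v * ∑ a, negMulLog (cnd v a) :=
      condEntropyOf_eq hp0 Uv Vv
    rw [hchain]
    refine Finset.sum_le_sum fun v _ => ?_
    by_cases hv : P v = 0
    · rw [hv, zero_mul, zero_mul]
    · refine mul_le_mul_of_nonneg_left ?_ (hPnn v)
      have := fano_aux (cnd v) (hcnd0 v) (sum_condProb_eq_one Uv {ω | Vv ω = v} hv) (a₀ v)
      simpa [hf, hqdef, hm] using this
  -- Step C : Jensen
  set s : ℝ := ∑ v, P v * q v with hs
  have hC : ∑ v, P v * f (q v) ≤ f s := by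
    have := hconc.le_map_sum (t := Finset.univ) (w := P) (p := q)
      (fun v _ => hPnn v) hPsum (fun v _ => hq01 v)
    simpa [smul_eq_mul, hs] using this
  -- Step D : s ≤ E
  have hs0 : 0 ≤ s := Finset.sum_nonneg fun v _ => mul_nonneg (hPnn v) (hq01 v).1
  have hD : s ≤ E := by
    have hterm : ∀ v, ∑ a, probOf p ({ω | Uv ω = a} ∩ {ω | Vv ω = v}) * cnd v a ≤
        P v * cnd v (a₀ v) := by
      intro v
      by_cases hv : P v = 0
      · rw [hv, zero_mul]
        refine le_of_eq (Finset.sum_eq_zero fun a _ => ?_)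
        rw [inter_prob_zero hp0 hv, zero_mul]
      · have hPa : ∀ a, probOf p ({ω | Uv ω = a} ∩ {ω | Vv ω = v}) = P v * cnd v a := by
          intro a
          show probOf p ({ω | Uv ω = a} ∩ {ω | Vv ω = v}) =
            P v * (probOf p ({ω | Uv ω = a} ∩ {ω | Vv ω = v}) / P v)
          rw [mul_comm, div_mul_cancel₀ _ hv]
        calc ∑ a, probOf p ({ω | Uv ω = a} ∩ {ω | Vv ω = v}) * cnd v a
            = P v * ∑ a, cnd v a * cnd v a := by
              rw [Finset.mul_sum]; exact Finset.sum_congr rfl fun a _ => by rw [hPa a]; ring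
          _ ≤ P v * ∑ a, cnd v (a₀ v) * cnd v a := by
              refine mul_le_mul_of_nonneg_left (Finset.sum_le_sum fun a _ => ?_) (hPnn v)
              exact mul_le_mul_of_nonneg_right (ha₀ v a) (hcnd0 v a)
          _ = P v * cnd v (a₀ v) := by
              rw [← Finset.mul_sum, sum_condProb_eq_one Uv {ω | Vv ω = v} hv, mul_one]
    have hρ2 : 1 - E ≤ ∑ v, P v * cnd v (a₀ v) :=
      hρ.trans (Finset.sum_le_sum fun v _ => hterm v)
    have : s = 1 - ∑ v, P v * cnd v (a₀ v) := by
      rw [hs]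
      simp only [hqdef, mul_sub, mul_one]
      rw [Finset.sum_sub_distrib, hPsum]
    linarith
  -- Step E : monotonicity
  have hE2 : E ≤ 2⁻¹ := by linarith
  have hEm : f s ≤ f E := by
    have hmono := binEntropy_strictMonoOn.monotoneOn
      (a := s) (b := E) ⟨hs0, hD.trans hE2⟩ ⟨hE0, hE2⟩ hD
    have : s * Real.log m ≤ E * Real.log m := mul_le_mul_of_nonneg_right hD hlogm
    simp only [hf]
    linarith
  calc condEntropyOf p Uv Vv ≤ ∑ v, P v * f (q v) := hAB
    _ ≤ f s := hC
    _ ≤ f E := hEm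
    _ = binEntropy E + E * Real.log m := rfl

end Stmt10Aux

namespace Stmt10Aux
open Real
variable {Ω : Type*} [Fintype Ω] {p : Ω → ℝ}

lemma sum_perm4 {α β γ δ M : Type*} [AddCommMonoid M]
    [Fintype α] [Fintype β] [Fintype γ] [Fintype δ]
    (F : α → β → γ → δ → M) :
    ∑ x, ∑ y, ∑ cp, ∑ a, F x y cp a = ∑ cp, ∑ y, ∑ a, ∑ x, F x y cp a :=
  calc ∑ x, ∑ y, ∑ cp, ∑ a, F x y cp a
      = ∑ x, ∑ cp, ∑ y, ∑ a, F x y cp a :=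
        Finset.sum_congr rfl fun x _ => Finset.sum_comm
    _ = ∑ cp, ∑ x, ∑ y, ∑ a, F x y cp a := Finset.sum_comm
    _ = ∑ cp, ∑ y, ∑ x, ∑ a, F x y cp a :=
        Finset.sum_congr rfl fun cp _ => Finset.sum_comm
    _ = ∑ cp, ∑ y, ∑ a, ∑ x, F x y cp a :=
        Finset.sum_congr rfl fun cp _ => Finset.sum_congr rfl fun y _ => Finset.sum_comm

end Stmt10Aux

section Main
open Stmt10Aux Real

theorem stmt10aux
    {Ω 𝒳 𝒴 : Type*} [Fintype Ω] [Fintype 𝒳] [Fintype 𝒴]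
    (hcard : 2 ≤ Fintype.card 𝒳)
    (n l : ℕ) (hl : l ≤ n)
    (p : Ω → ℝ) (hp0 : ∀ ω, 0 ≤ p ω) (hp1 : ∑ ω, p ω = 1)
    (X : Ω → (Fin n → 𝒳)) (Y : Ω → (Fin n → 𝒴)) (Chat : Ω → (Fin n → 𝒳))
    (I0 : Finset (Fin n))
    (hc0 : I0.card = n - l)
    (T : (Fin n → 𝒳) ≃ (Fin n → 𝒳))
    (hstep : ∀ i ∈ I0, ∀ (cp : Fin i.1 → 𝒳) (y : Fin n → 𝒴),
      0 < probOf p {ω | prefixVec (T (X ω)) i.1 i.2.le = cp ∧ Y ω = y} →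
      ∀ (a : 𝒳) (x : Fin n → 𝒳),
        probOf p {ω | Chat ω i = a ∧ X ω = x ∧ prefixVec (Chat ω) i.1 i.2.le = cp ∧ Y ω = y} =
          condProb p {ω | T (X ω) i = a}
              {ω | prefixVec (T (X ω)) i.1 i.2.le = cp ∧ Y ω = y} *
            probOf p {ω | X ω = x ∧ prefixVec (Chat ω) i.1 i.2.le = cp ∧ Y ω = y})
    (E : ℝ)
    (hE : E = probOf p {ω | T.symm (Chat ω) ≠ X ω})
    (hhalf : E ≤ 1 / 2) :
    ∑ i ∈ I0,
        condEntropyOf p (fun ω => T (X ω) i)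
          (fun ω => (prefixVec (T (X ω)) i.1 i.2.le, Y ω)) /
            Real.log (Fintype.card 𝒳) ≤
      (n : ℝ) * (E +
        (Real.negMulLog E + Real.negMulLog (1 - E)) / Real.log (Fintype.card 𝒳)) := by
  classical
  have hE0 : 0 ≤ E := hE ▸ probOf_nonneg hp0 _
  have hlogpos : 0 < Real.log (Fintype.card 𝒳) :=
    Real.log_pos (by exact_mod_cast hcard)
  -- per-coordinate bound
  have hmain : ∀ i ∈ I0,
      condEntropyOf p (fun ω => T (X ω) i)
        (fun ω => (prefixVec (T (X ω)) i.1 i.2.le, Y ω)) ≤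
      Real.binEntropy E + E * Real.log (Fintype.card 𝒳) := by
    intro i hi
    refine key hcard hp0 hp1 _ _ E hE0 hhalf ?_
    have hVset : ∀ (v : (Fin i.1 → 𝒳) × (Fin n → 𝒴)),
        {ω | (prefixVec (T (X ω)) i.1 i.2.le, Y ω) = v} =
          {ω | prefixVec (T (X ω)) i.1 i.2.le = v.1 ∧ Y ω = v.2} := by
      intro v; ext ω; simp [Prod.ext_iff]
    simp only [hVset]
    rw [Fintype.sum_prod_type]
    -- notation
    set D : Set Ω := {ω | Chat ω i = T (X ω) i ∧
        prefixVec (Chat ω) i.1 i.2.le = prefixVec (T (X ω)) i.1 i.2.le} with hD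
    -- step a : 1 - E = P(success)
    have hS : probOf p {ω | T.symm (Chat ω) = X ω} = 1 - E := by
      have hc := probOf_add_compl p {ω | T.symm (Chat ω) = X ω}
      rw [hp1] at hc
      have h2 : {ω | T.symm (Chat ω) ≠ X ω} = {ω | T.symm (Chat ω) = X ω}ᶜ := by
        ext ω; simp
      rw [hE, h2]; linarith
    -- step b : success ⊆ D
    have hSD : {ω | T.symm (Chat ω) = X ω} ⊆ D := by
      intro ω hω
      have hC : Chat ω = T (X ω) := by
        have h3 := congrArg T hω; rwa [Equiv.apply_symm_apply] at h3
      simp only [hD, Set.mem_setOf_eq]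
      exact ⟨by rw [hC], by rw [hC]⟩
    -- step c : fiber decomposition of D
    have hPD : probOf p D =
        ∑ x, ∑ cp, ∑ y, probOf p
          (D ∩ {ω | (X ω, prefixVec (Chat ω) i.1 i.2.le, Y ω) = (x, cp, y)}) := by
      rw [probOf_fiber p D (fun ω => (X ω, prefixVec (Chat ω) i.1 i.2.le, Y ω))]
      rw [Fintype.sum_prod_type]
      refine Finset.sum_congr rfl fun x _ => ?_
      rw [Fintype.sum_prod_type]
    -- step d : per-term bound using hstep
    have hterm : ∀ (x : Fin n → 𝒳) (cp : Fin i.1 → 𝒳) (y : Fin n → 𝒴),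
        probOf p (D ∩ {ω | (X ω, prefixVec (Chat ω) i.1 i.2.le, Y ω) = (x, cp, y)}) ≤
          if prefixVec (T x) i.1 i.2.le = cp then
            condProb p {ω | T (X ω) i = T x i}
                {ω | prefixVec (T (X ω)) i.1 i.2.le = cp ∧ Y ω = y} *
              probOf p ({ω | X ω = x} ∩ {ω | Y ω = y})
          else 0 := by
      intro x cp y
      by_cases hcp : prefixVec (T x) i.1 i.2.le = cp
      · rw [if_pos hcp]
        have hDset : D ∩ {ω | (X ω, prefixVec (Chat ω) i.1 i.2.le, Y ω) = (x, cp, y)} =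
            {ω | Chat ω i = T x i ∧ X ω = x ∧
              prefixVec (Chat ω) i.1 i.2.le = cp ∧ Y ω = y} := by
          ext ω
          simp only [hD, Set.mem_inter_iff, Set.mem_setOf_eq, Prod.mk.injEq]
          constructor
          · rintro ⟨⟨h1, h2⟩, h3, h4, h5⟩
            subst h3; exact ⟨h1, rfl, h4, h5⟩
          · rintro ⟨h1, h3, h4, h5⟩
            subst h3; exact ⟨⟨h1, h4.trans hcp.symm⟩, rfl, h4, h5⟩
        rw [hDset]
        rcases le_or_gt (probOf p
            {ω | prefixVec (T (X ω)) i.1 i.2.le = cp ∧ Y ω = y}) 0 with hpos | hpos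
        · have hz : probOf p {ω | Chat ω i = T x i ∧ X ω = x ∧
              prefixVec (Chat ω) i.1 i.2.le = cp ∧ Y ω = y} = 0 := by
            refine probOf_eq_zero hp0 ?_ hpos
            rintro ω ⟨h1, h2, h3, h4⟩
            subst h2; exact ⟨hcp, h4⟩
          rw [hz]
          exact mul_nonneg (condProb_nonneg hp0 _ _) (probOf_nonneg hp0 _)
        · rw [hstep i hi cp y hpos (T x i) x]
          refine mul_le_mul_of_nonneg_left (probOf_mono hp0 ?_) (condProb_nonneg hp0 _ _)
          rintro ω ⟨h1, h2, h3⟩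
          exact ⟨h1, h3⟩
      · rw [if_neg hcp]
        have hz : D ∩ {ω | (X ω, prefixVec (Chat ω) i.1 i.2.le, Y ω) = (x, cp, y)} = ∅ := by
          ext ω
          simp only [hD, Set.mem_inter_iff, Set.mem_setOf_eq, Prod.mk.injEq,
            Set.mem_empty_iff_false, iff_false, not_and]
          rintro ⟨h1, h2⟩ h3 h4 h5
          subst h3
          exact hcp (h2 ▸ h4)
        rw [hz, probOf_empty]
    -- step e : assemble upper bound for 1 - E
    have hM : 1 - E ≤ ∑ x, ∑ y,
        condProb p {ω | T (X ω) i = T x i}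
            {ω | prefixVec (T (X ω)) i.1 i.2.le = prefixVec (T x) i.1 i.2.le ∧ Y ω = y} *
          probOf p ({ω | X ω = x} ∩ {ω | Y ω = y}) := by
      rw [← hS]
      refine (probOf_mono hp0 hSD).trans ?_
      rw [hPD]
      have hb1 : ∑ x, ∑ cp, ∑ y, probOf p
            (D ∩ {ω | (X ω, prefixVec (Chat ω) i.1 i.2.le, Y ω) = (x, cp, y)}) ≤
          ∑ x, ∑ cp, ∑ y, (if prefixVec (T x) i.1 i.2.le = cp then
            condProb p {ω | T (X ω) i = T x i}
                {ω | prefixVec (T (X ω)) i.1 i.2.le = cp ∧ Y ω = y} *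
              probOf p ({ω | X ω = x} ∩ {ω | Y ω = y}) else 0) := by
        refine Finset.sum_le_sum fun x _ => Finset.sum_le_sum fun cp _ =>
          Finset.sum_le_sum fun y _ => hterm x cp y
      refine hb1.trans (le_of_eq ?_)
      refine Finset.sum_congr rfl fun x _ => ?_
      rw [Finset.sum_comm]
      refine Finset.sum_congr rfl fun y _ => ?_
      simp [Finset.sum_ite_eq]
    -- step f : the target sum equals the same expression
    refine hM.trans (le_of_eq ?_)
    have hfib2 : ∀ (cp : Fin i.1 → 𝒳) (y : Fin n → 𝒴) (a : 𝒳),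
        probOf p ({ω | T (X ω) i = a} ∩
            {ω | prefixVec (T (X ω)) i.1 i.2.le = cp ∧ Y ω = y}) =
          ∑ x, probOf p (({ω | T (X ω) i = a} ∩
            {ω | prefixVec (T (X ω)) i.1 i.2.le = cp ∧ Y ω = y}) ∩ {ω | X ω = x}) :=
      fun cp y a => probOf_fiber p _ X
    have hsete : ∀ (cp : Fin i.1 → 𝒳) (y : Fin n → 𝒴) (a : 𝒳) (x : Fin n → 𝒳),
        ({ω | T (X ω) i = a} ∩
            {ω | prefixVec (T (X ω)) i.1 i.2.le = cp ∧ Y ω = y}) ∩ {ω | X ω = x} =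
          if T x i = a ∧ prefixVec (T x) i.1 i.2.le = cp then
            ({ω | X ω = x} ∩ {ω | Y ω = y}) else ∅ := by
      intro cp y a x
      split_ifs with h
      · ext ω
        simp only [Set.mem_inter_iff, Set.mem_setOf_eq]
        constructor
        · rintro ⟨⟨h1, h2, h3⟩, h4⟩; exact ⟨h4, h3⟩
        · rintro ⟨h4, h3⟩; subst h4; exact ⟨⟨h.1, h.2, h3⟩, rfl⟩
      · ext ω
        simp only [Set.mem_inter_iff, Set.mem_setOf_eq, Set.mem_empty_iff_false, iff_false,
          not_and]
        rintro ⟨h1, h2, h3⟩ h4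
        subst h4
        exact h ⟨h1, h2⟩
    calc ∑ x, ∑ y,
        condProb p {ω | T (X ω) i = T x i}
            {ω | prefixVec (T (X ω)) i.1 i.2.le = prefixVec (T x) i.1 i.2.le ∧ Y ω = y} *
          probOf p ({ω | X ω = x} ∩ {ω | Y ω = y})
        = ∑ x, ∑ y, ∑ cp, (if prefixVec (T x) i.1 i.2.le = cp then
            probOf p ({ω | X ω = x} ∩ {ω | Y ω = y}) *
              condProb p {ω | T (X ω) i = T x i}
                {ω | prefixVec (T (X ω)) i.1 i.2.le = cp ∧ Y ω = y} else 0) := by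
          refine Finset.sum_congr rfl fun x _ => Finset.sum_congr rfl fun y _ => ?_
          rw [Finset.sum_ite_eq]
          simp [mul_comm]
      _ = ∑ x, ∑ y, ∑ cp, ∑ a, (if T x i = a ∧ prefixVec (T x) i.1 i.2.le = cp then
            probOf p ({ω | X ω = x} ∩ {ω | Y ω = y}) *
              condProb p {ω | T (X ω) i = a}
                {ω | prefixVec (T (X ω)) i.1 i.2.le = cp ∧ Y ω = y} else 0) := by
          refine Finset.sum_congr rfl fun x _ => Finset.sum_congr rfl fun y _ =>
            Finset.sum_congr rfl fun cp _ => ?_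
          simp only [ite_and]
          rw [Finset.sum_ite_eq]
          simp
      _ = ∑ cp, ∑ y, ∑ a, ∑ x, (if T x i = a ∧ prefixVec (T x) i.1 i.2.le = cp then
            probOf p ({ω | X ω = x} ∩ {ω | Y ω = y}) *
              condProb p {ω | T (X ω) i = a}
                {ω | prefixVec (T (X ω)) i.1 i.2.le = cp ∧ Y ω = y} else 0) := by
          exact sum_perm4 _
      _ = ∑ cp, ∑ y, ∑ a,
            probOf p ({ω | T (X ω) i = a} ∩
                {ω | prefixVec (T (X ω)) i.1 i.2.le = cp ∧ Y ω = y}) *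
              condProb p {ω | T (X ω) i = a}
                {ω | prefixVec (T (X ω)) i.1 i.2.le = cp ∧ Y ω = y} := by
          refine Finset.sum_congr rfl fun cp _ => Finset.sum_congr rfl fun y _ =>
            Finset.sum_congr rfl fun a _ => ?_
          rw [hfib2 cp y a, Finset.sum_mul]
          refine Finset.sum_congr rfl fun x _ => ?_
          rw [hsete cp y a x, apply_ite (probOf p), probOf_empty, ite_mul, zero_mul]
  -- final aggregation
  have hbE : Real.negMulLog E + Real.negMulLog (1 - E) = Real.binEntropy E :=
    (Real.binEntropy_eq_negMulLog_add_negMulLog_one_sub E).symm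
  have hE1 : E ≤ 1 := by linarith
  have hbnn : 0 ≤ Real.binEntropy E := Real.binEntropy_nonneg hE0 hE1
  have hstepsum : ∑ i ∈ I0,
      condEntropyOf p (fun ω => T (X ω) i)
        (fun ω => (prefixVec (T (X ω)) i.1 i.2.le, Y ω)) /
          Real.log (Fintype.card 𝒳) ≤
      ∑ _i ∈ I0, (E + Real.binEntropy E / Real.log (Fintype.card 𝒳)) := by
    refine Finset.sum_le_sum fun i hi => ?_
    have h1 := hmain i hi
    have h2 : (Real.binEntropy E + E * Real.log (Fintype.card 𝒳)) /
        Real.log (Fintype.card 𝒳) = E + Real.binEntropy E / Real.log (Fintype.card 𝒳) := by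
      field_simp
      ring
    rw [← h2]
    exact div_le_div_of_nonneg_right h1 hlogpos.le
  refine hstepsum.trans ?_
  rw [Finset.sum_const, nsmul_eq_mul, hc0, hbE]
  refine mul_le_mul_of_nonneg_right ?_ (by positivity)
  exact_mod_cast Nat.sub_le n l

end Main

/-- for the stochastic SC decoder `Ĉ` (arbitrary partition), with
`E = Prob(T⁻¹(Ĉ) ≠ X) ≤ 1/2`, one has
`Σ_{i ∈ I0} H(C_i|C_1^{i-1},Y) ≤ n (E + h(E))`, entropies in base `|𝒳|`. -/
theorem stmt10
    {Ω 𝒳 𝒴 : Type*} [Fintype Ω] [Fintype 𝒳] [Fintype 𝒴]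
    (hcard : 2 ≤ Fintype.card 𝒳)
    (n l : ℕ) (hl : l ≤ n)
    (p : Ω → ℝ) (hp0 : ∀ ω, 0 ≤ p ω) (hp1 : ∑ ω, p ω = 1)
    (X : Ω → (Fin n → 𝒳)) (Y : Ω → (Fin n → 𝒴)) (Chat : Ω → (Fin n → 𝒳))
    (A : (Fin n → 𝒳) → (Fin l → 𝒳)) (B : (Fin n → 𝒳) → (Fin (n - l) → 𝒳))
    (I1 I0 : Finset (Fin n))
    (hdisj : Disjoint I1 I0) (huniv : I1 ∪ I0 = Finset.univ)
    (hc1 : I1.card = l) (hc0 : I0.card = n - l)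
    (T : (Fin n → 𝒳) ≃ (Fin n → 𝒳))
    (hT1 : ∀ x (j : Fin l), T x (I1.orderIsoOfFin hc1 j).1 = A x j)
    (hT0 : ∀ x (j : Fin (n - l)), T x (I0.orderIsoOfFin hc0 j).1 = B x j)
    (hkeep : ∀ ω, ∀ i ∈ I1, Chat ω i = T (X ω) i)
    (hstep : ∀ i ∈ I0, ∀ (cp : Fin i.1 → 𝒳) (y : Fin n → 𝒴),
      0 < probOf p {ω | prefixVec (T (X ω)) i.1 i.2.le = cp ∧ Y ω = y} →
      ∀ (a : 𝒳) (x : Fin n → 𝒳),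
        probOf p {ω | Chat ω i = a ∧ X ω = x ∧ prefixVec (Chat ω) i.1 i.2.le = cp ∧ Y ω = y} =
          condProb p {ω | T (X ω) i = a}
              {ω | prefixVec (T (X ω)) i.1 i.2.le = cp ∧ Y ω = y} *
            probOf p {ω | X ω = x ∧ prefixVec (Chat ω) i.1 i.2.le = cp ∧ Y ω = y})
    (E : ℝ)
    (hE : E = probOf p {ω | T.symm (Chat ω) ≠ X ω})
    (hhalf : E ≤ 1 / 2) :
    ∑ i ∈ I0,
        condEntropyOf p (fun ω => T (X ω) i)
          (fun ω => (prefixVec (T (X ω)) i.1 i.2.le, Y ω)) /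
            Real.log (Fintype.card 𝒳) ≤
      (n : ℝ) * (E +
        (Real.negMulLog E + Real.negMulLog (1 - E)) / Real.log (Fintype.card 𝒳)) :=
  stmt10aux hcard n l hl p hp0 hp1 X Y Chat I0 hc0 T hstep E hE hhalf
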